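/- For all graphs A and B, the graph A ⊗ B is provable in GS if and only if A is provable in GS and B is provable in GS. -/

import Mathlib

namespace GSP

/-- Atoms: a propositional variable (coded by a natural number) with a polarity. -/
abbrev Atom := ℕ × Bool

/-- The dual atom. -/
def dualAtom (a : Atom) : Atom := (a.1, !a.2)

/-- A finite, simple, undirected graph whose vertices are labelled by atoms. -/
structure LGraph where
  V : Type
  [fintype : Fintype V]
  adj : V → V → Prop
  symm : ∀ {v w : V}, adj v w → adj w v
  irrefl : ∀ v : V, ¬ adj v v
  label : V → Atom

attribute [instance] LGraph.fintype

namespace LGraph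

/-- An isomorphism of labelled graphs: a vertex bijection preserving labels and
preserving and reflecting edges. -/
structure Iso (G H : LGraph) where
  toEquiv : G.V ≃ H.V
  adj_iff : ∀ v w : G.V, G.adj v w ↔ H.adj (toEquiv v) (toEquiv w)
  label_eq : ∀ v : G.V, H.label (toEquiv v) = G.label v

/-- `G ≅ H` : the graphs `G` and `H` are isomorphic. -/
def iso (G H : LGraph) : Prop := Nonempty (Iso G H)

/-- The empty graph. -/
def empty : LGraph where
  V := Empty
  adj _ _ := False
  symm h := h.elim
  irrefl v := v.elim
  label v := v.elim

/-- The single-vertex graph labelled by the atom `a`. -/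
def single (a : Atom) : LGraph where
  V := Unit
  adj _ _ := False
  symm h := h.elim
  irrefl _ h := h
  label _ := a

def parAdj (G H : LGraph) : G.V ⊕ H.V → G.V ⊕ H.V → Prop
  | .inl a, .inl b => G.adj a b
  | .inr a, .inr b => H.adj a b
  | _, _ => False

/-- The par `G ⅋ H` : disjoint union of `G` and `H`. -/
def par (G H : LGraph) : LGraph where
  V := G.V ⊕ H.V
  adj := parAdj G H
  symm := by
    rintro (a | a) (b | b) h
    · exact G.symm h
    · exact h.elim
    · exact h.elim
    · exact H.symm h
  irrefl := by
    rintro (a | a) h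
    · exact G.irrefl a h
    · exact H.irrefl a h
  label := Sum.elim G.label H.label

def tensorAdj (G H : LGraph) : G.V ⊕ H.V → G.V ⊕ H.V → Prop
  | .inl a, .inl b => G.adj a b
  | .inr a, .inr b => H.adj a b
  | .inl _, .inr _ => True
  | .inr _, .inl _ => True

/-- The tensor `G ⊗ H` : join of `G` and `H` (disjoint union plus all edges in between). -/
def tensor (G H : LGraph) : LGraph where
  V := G.V ⊕ H.V
  adj := tensorAdj G H
  symm := by
    rintro (a | a) (b | b) h
    · exact G.symm h
    · exact trivial
    · exact trivial
    · exact H.symm h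
  irrefl := by
    rintro (a | a) h
    · exact G.irrefl a h
    · exact H.irrefl a h
  label := Sum.elim G.label H.label

/-- The dual graph `Ḡ` : same vertices, complemented edges, dualized labels. -/
def dual (G : LGraph) : LGraph where
  V := G.V
  adj v w := v ≠ w ∧ ¬ G.adj v w
  symm h := ⟨fun e => h.1 e.symm, fun h' => h.2 (G.symm h')⟩
  irrefl _ h := h.1 rfl
  label v := dualAtom (G.label v)

def plugAdj (C : LGraph) (R : Set C.V) (X : LGraph) : C.V ⊕ X.V → C.V ⊕ X.V → Prop
  | .inl a, .inl b => C.adj a b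
  | .inr a, .inr b => X.adj a b
  | .inl a, .inr _ => a ∈ R
  | .inr _, .inl b => b ∈ R

/-- `C[X]_R` : the graph obtained from the context `C[·]_R` by inserting the graph `X`
as a module whose vertices are adjacent exactly to the vertices in `R`. -/
def plug (C : LGraph) (R : Set C.V) (X : LGraph) : LGraph where
  V := C.V ⊕ X.V
  adj := plugAdj C R X
  symm := by
    rintro (a | a) (b | b) h
    · exact C.symm h
    · exact h
    · exact h
    · exact X.symm h
  irrefl := by
    rintro (a | a) h
    · exact C.irrefl a h
    · exact X.irrefl a h
  label := Sum.elim C.label X.label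

def compAdj (G : LGraph) (H : G.V → LGraph) :
    (Σ v : G.V, (H v).V) → (Σ v : G.V, (H v).V) → Prop := fun x y =>
  (∃ (v : G.V) (a b : (H v).V), x = ⟨v, a⟩ ∧ y = ⟨v, b⟩ ∧ (H v).adj a b) ∨
    (x.1 ≠ y.1 ∧ G.adj x.1 y.1)

/-- The composition `G⟨H v₁, …, H vₙ⟩` of the family `H` via the graph `G`:
replace each vertex `v` of `G` by the graph `H v`. -/
def comp (G : LGraph) (H : G.V → LGraph) : LGraph where
  V := Σ v : G.V, (H v).V
  adj := compAdj G H
  symm := by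
    rintro x y (⟨v, a, b, hx, hy, hab⟩ | ⟨hne, hadj⟩)
    · exact Or.inl ⟨v, b, a, hy, hx, (H v).symm hab⟩
    · exact Or.inr ⟨hne.symm, G.symm hadj⟩
  irrefl := by
    rintro ⟨v, a⟩ (⟨w, x, y, hx, hy, hxy⟩ | ⟨hne, _⟩)
    · have h := hx.symm.trans hy
      obtain rfl : x = y := by simpa using h
      exact (H w).irrefl x hxy
    · exact hne rfl
  label x := (H x.1).label x.2

/-- A module of `G` : a set `M` of vertices such that every vertex outside `M`
is adjacent either to all vertices of `M` or to none of them. -/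
def IsModule (G : LGraph) (M : Set G.V) : Prop :=
  ∀ v ∉ M, ∀ x ∈ M, ∀ y ∈ M, (G.adj v x ↔ G.adj v y)

/-- A prime graph: at least 2 vertices and only trivial modules. -/
def Prime (G : LGraph) : Prop :=
  2 ≤ Fintype.card G.V ∧
    ∀ M : Set G.V, G.IsModule M → M = ∅ ∨ (∃ v, M = {v}) ∨ M = Set.univ

/-- `G` is `P₄`-free: no four distinct vertices induce a path on 4 vertices. -/
def P4Free (G : LGraph) : Prop :=
  ¬ ∃ v₁ v₂ v₃ v₄ : G.V,
      v₁ ≠ v₂ ∧ v₁ ≠ v₃ ∧ v₁ ≠ v₄ ∧ v₂ ≠ v₃ ∧ v₂ ≠ v₄ ∧ v₃ ≠ v₄ ∧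
      G.adj v₁ v₂ ∧ G.adj v₂ v₃ ∧ G.adj v₃ v₄ ∧
      ¬ G.adj v₁ v₃ ∧ ¬ G.adj v₁ v₄ ∧ ¬ G.adj v₂ v₄

end LGraph

open LGraph

/-- The `n`-fold tensor `X₁ ⊗ ⋯ ⊗ Xₙ`. -/
def bigTensor : (n : ℕ) → (Fin n → LGraph) → LGraph
  | 0, _ => LGraph.empty
  | n + 1, F => (F 0).tensor (bigTensor n fun i => F i.succ)

/-- The `n`-fold par `X₁ ⅋ ⋯ ⅋ Xₙ`. -/
def bigPar : (n : ℕ) → (Fin n → LGraph) → LGraph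
  | 0, _ => LGraph.empty
  | n + 1, F => (F 0).par (bigPar n fun i => F i.succ)

/-- The inference rules of system GS (premise, conclusion). -/
inductive GSRule : LGraph → LGraph → Prop
  /-- ai↓ : premise `∅`, conclusion `ā ⅋ a`. -/
  | ai (a : Atom) : GSRule LGraph.empty ((single (dualAtom a)).par (single a))
  /-- ss↓ : premise `B[A]_S`, conclusion `B ⅋ A`, for `A ≠ ∅` and `S ≠ ∅`. -/
  | ss (A B : LGraph) (S : Set B.V) :
      Nonempty A.V → S ≠ ∅ → GSRule (B.plug S A) (B.par A)
  /-- p↓ : premise `(M₁ ⅋ N₁) ⊗ ⋯ ⊗ (Mₙ ⅋ Nₙ)`, conclusion `P̄⟨M₁,…,Mₙ⟩ ⅋ P⟨N₁,…,Nₙ⟩`,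
  for `P` prime with `n = |V(P)| ≥ 4` and all `Mᵢ ≠ ∅`. -/
  | p (n : ℕ) (P : LGraph) (e : P.V ≃ Fin n) (M N : Fin n → LGraph) :
      P.Prime → 4 ≤ n → (∀ i, Nonempty (M i).V) →
      GSRule (bigTensor n fun i => (M i).par (N i))
        ((P.dual.comp fun v => M (e v)).par (P.comp fun v => N (e v)))

/-- The "up" rules ai↑, ss↑, p↑ (premise, conclusion). -/
inductive UpRule : LGraph → LGraph → Prop
  /-- ai↑ : premise `a ⊗ ā`, conclusion `∅`. -/
  | ai (a : Atom) : UpRule ((single a).tensor (single (dualAtom a))) LGraph.empty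
  /-- ss↑ : premise `B ⊗ A`, conclusion `B[A]_S`, for `A ≠ ∅` and `S ≠ V(B)`. -/
  | ss (A B : LGraph) (S : Set B.V) :
      Nonempty A.V → S ≠ Set.univ → UpRule (B.tensor A) (B.plug S A)
  /-- p↑ : premise `P⟨M₁,…,Mₙ⟩ ⊗ P̄⟨N₁,…,Nₙ⟩`, conclusion `(M₁ ⊗ N₁) ⅋ ⋯ ⅋ (Mₙ ⊗ Nₙ)`,
  for `P` prime with `n = |V(P)| ≥ 4` and all `Mᵢ ≠ ∅`. -/
  | p (n : ℕ) (P : LGraph) (e : P.V ≃ Fin n) (M N : Fin n → LGraph) :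
      P.Prime → 4 ≤ n → (∀ i, Nonempty (M i).V) →
      UpRule ((P.comp fun v => M (e v)).tensor (P.dual.comp fun v => N (e v)))
        (bigPar n fun i => (M i).tensor (N i))

/-- The rules of system SGS : the rules of GS together with their duals. -/
def SGSRule (G H : LGraph) : Prop := GSRule G H ∨ UpRule G H

/-- A single inference step in a system: inside some context, replace a module
isomorphic to the premise of a rule by the corresponding conclusion. -/
def Step (Rules : LGraph → LGraph → Prop) (G H : LGraph) : Prop :=
  ∃ (C : LGraph) (R : Set C.V) (p c : LGraph),
    Rules p c ∧ G.iso (C.plug R p) ∧ H.iso (C.plug R c)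

/-- A derivation in a system from `G` to `H` : a finite sequence of inference steps
and isomorphisms leading from `G` to `H`. -/
def Deriv (Rules : LGraph → LGraph → Prop) (G H : LGraph) : Prop :=
  Relation.ReflTransGen (fun X Y => X.iso Y ∨ Step Rules X Y) G H

/-- A graph is provable in a system if there is a derivation from `∅` to it. -/
def Provable (Rules : LGraph → LGraph → Prop) (G : LGraph) : Prop :=
  Deriv Rules LGraph.empty G

/-- Formulas: unit, positive and negative atoms, par and tensor. -/
inductive Formula where
  | unit : Formula
  | pos (a : ℕ) : Formula
  | neg (a : ℕ) : Formula
  | par (φ ψ : Formula) : Formula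
  | tens (φ ψ : Formula) : Formula

/-- The graph `[φ]` of a formula `φ`. -/
def Formula.graph : Formula → LGraph
  | .unit => LGraph.empty
  | .pos a => single (a, true)
  | .neg a => single (a, false)
  | .par φ ψ => φ.graph.par ψ.graph
  | .tens φ ψ => φ.graph.tensor ψ.graph

/-- Structural equivalence of formulas: the smallest congruence making `⅋` and `⊗`
associative and commutative with unit `∘`. -/
inductive Formula.equiv : Formula → Formula → Prop
  | refl (φ) : Formula.equiv φ φ
  | symm {φ ψ} : Formula.equiv φ ψ → Formula.equiv ψ φ
  | trans {φ ψ χ} : Formula.equiv φ ψ → Formula.equiv ψ χ → Formula.equiv φ χ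
  | parComm (φ ψ) : Formula.equiv (.par φ ψ) (.par ψ φ)
  | parAssoc (φ ψ χ) : Formula.equiv (.par φ (.par ψ χ)) (.par (.par φ ψ) χ)
  | parUnit (φ) : Formula.equiv (.par φ .unit) φ
  | tensComm (φ ψ) : Formula.equiv (.tens φ ψ) (.tens ψ φ)
  | tensAssoc (φ ψ χ) : Formula.equiv (.tens φ (.tens ψ χ)) (.tens (.tens φ ψ) χ)
  | tensUnit (φ) : Formula.equiv (.tens φ .unit) φ
  | parCongr {φ φ' ψ ψ'} : Formula.equiv φ φ' → Formula.equiv ψ ψ' →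
      Formula.equiv (.par φ ψ) (.par φ' ψ')
  | tensCongr {φ φ' ψ ψ'} : Formula.equiv φ φ' → Formula.equiv ψ ψ' →
      Formula.equiv (.tens φ ψ) (.tens φ' ψ')

/-- A formula is unit-free if it contains no occurrence of the unit `∘`. -/
def Formula.UnitFree : Formula → Prop
  | .unit => False
  | .pos _ => True
  | .neg _ => True
  | .par φ ψ => φ.UnitFree ∧ ψ.UnitFree
  | .tens φ ψ => φ.UnitFree ∧ ψ.UnitFree

/-- The sequent calculus MLL° (multiplicative linear logic with mix) on multisets
of formulas. -/
inductive MLL : Multiset Formula → Prop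
  | ax (a : ℕ) : MLL {Formula.pos a, Formula.neg a}
  | tens {Γ Δ : Multiset Formula} (φ ψ : Formula) :
      MLL (φ ::ₘ Γ) → MLL (ψ ::ₘ Δ) → MLL (Formula.tens φ ψ ::ₘ (Γ + Δ))
  | par {Γ : Multiset Formula} (φ ψ : Formula) :
      MLL (φ ::ₘ ψ ::ₘ Γ) → MLL (Formula.par φ ψ ::ₘ Γ)
  | mix {Γ Δ : Multiset Formula} : MLL Γ → MLL Δ → MLL (Γ + Δ)

namespace LGraph

def Iso.refl (G : LGraph) : Iso G G := ⟨Equiv.refl _, fun _ _ => Iff.rfl, fun _ => rfl⟩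

def Iso.symm {G H : LGraph} (e : Iso G H) : Iso H G where
  toEquiv := e.toEquiv.symm
  adj_iff v w := by rw [e.adj_iff]; simp
  label_eq v := by
    have := e.label_eq (e.toEquiv.symm v)
    simpa using this.symm

def Iso.trans {G H K : LGraph} (e : Iso G H) (f : Iso H K) : Iso G K where
  toEquiv := e.toEquiv.trans f.toEquiv
  adj_iff v w := by rw [e.adj_iff, f.adj_iff]; rfl
  label_eq v := by
    have h1 := f.label_eq (e.toEquiv v)
    have h2 := e.label_eq v
    simpa [h2] using h1

theorem iso_refl (G : LGraph) : G.iso G := ⟨Iso.refl G⟩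
theorem iso_symm {G H : LGraph} (h : G.iso H) : H.iso G := h.elim fun e => ⟨e.symm⟩
theorem iso_trans {G H K : LGraph} (h : G.iso H) (h' : H.iso K) : G.iso K :=
  h.elim fun e => h'.elim fun f => ⟨e.trans f⟩

def isoOfIsEmpty (A : LGraph) [IsEmpty A.V] : Iso empty A :=
  letI : IsEmpty empty.V := ⟨fun x => x.elim⟩
  { toEquiv := Equiv.equivOfIsEmpty _ _
    adj_iff := fun v _ => v.elim
    label_eq := fun v => v.elim }

end LGraph
namespace LGraph

def plugCongr (C : LGraph) (R : Set C.V) {X Y : LGraph} (e : Iso X Y) :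
    Iso (C.plug R X) (C.plug R Y) where
  toEquiv := Equiv.sumCongr (Equiv.refl C.V) e.toEquiv
  adj_iff v w := by
    rcases v with v | v <;> rcases w with w | w <;>
      simp [plug, plugAdj, e.adj_iff] <;> trivial
  label_eq v := by
    rcases v with v | v
    · rfl
    · exact e.label_eq v

/-- Composition of contexts. -/
def plugPlug (C : LGraph) (R : Set C.V) (C' : LGraph) (R' : Set C'.V) (X : LGraph) :
    Iso (C.plug R (C'.plug R' X))
      ((C.plug R C').plug {z | Sum.elim (· ∈ R) (· ∈ R') z} X) where
  toEquiv := (Equiv.sumAssoc C.V C'.V X.V).symm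
  adj_iff v w := by
    rcases v with v | (v | v) <;> rcases w with w | (w | w) <;>
      simp [plug, plugAdj, Equiv.sumAssoc] <;> trivial
  label_eq v := by
    rcases v with v | (v | v) <;> simp [plug, Equiv.sumAssoc] <;> trivial

def plugEmpty (C : LGraph) (R : Set C.V) : Iso (C.plug R LGraph.empty) C where
  toEquiv :=
    letI : IsEmpty LGraph.empty.V := ⟨fun x => x.elim⟩
    Equiv.sumEmpty C.V LGraph.empty.V
  adj_iff v w := by
    rcases v with v | v
    · rcases w with w | w
      · simp [plug, plugAdj, Equiv.sumEmpty] <;> trivial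
      · exact w.elim
    · exact v.elim
  label_eq v := by
    rcases v with v | v
    · simp [plug, Equiv.sumEmpty] <;> trivial
    · exact v.elim

def plugUniv (C X : LGraph) : Iso (C.plug Set.univ X) (C.tensor X) where
  toEquiv := Equiv.refl _
  adj_iff v w := by
    rcases v with v | v <;> rcases w with w | w <;>
      simp [plug, plugAdj, tensor, tensorAdj] <;> trivial
  label_eq v := by rcases v with v | v <;> rfl

def tensorComm (A B : LGraph) : Iso (A.tensor B) (B.tensor A) where
  toEquiv := Equiv.sumComm A.V B.V
  adj_iff v w := by
    rcases v with v | v <;> rcases w with w | w <;>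
      simp [tensor, tensorAdj, Equiv.sumComm] <;> trivial
  label_eq v := by rcases v with v | v <;> rfl

end LGraph

theorem Step.plug {Rules : LGraph → LGraph → Prop} {G H : LGraph}
    (h : Step Rules G H) (C : LGraph) (R : Set C.V) :
    Step Rules (C.plug R G) (C.plug R H) := by
  obtain ⟨C', R', p, c, hr, ⟨eG⟩, ⟨eH⟩⟩ := h
  refine ⟨C.plug R C', {z | Sum.elim (· ∈ R) (· ∈ R') z}, p, c, hr, ?_, ?_⟩
  · exact ⟨((C.plugCongr R eG).trans (C.plugPlug R C' R' p))⟩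
  · exact ⟨((C.plugCongr R eH).trans (C.plugPlug R C' R' c))⟩

theorem Deriv.plug {Rules : LGraph → LGraph → Prop} {G H : LGraph}
    (h : Deriv Rules G H) (C : LGraph) (R : Set C.V) :
    Deriv Rules (C.plug R G) (C.plug R H) := by
  induction h with
  | refl => exact Relation.ReflTransGen.refl
  | tail _ hstep ih =>
      refine ih.tail ?_
      rcases hstep with hiso | hstep
      · exact Or.inl (hiso.elim fun e => ⟨C.plugCongr R e⟩)
      · exact Or.inr (hstep.plug C R)

theorem Deriv.of_iso_left {Rules : LGraph → LGraph → Prop} {G G' H : LGraph}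
    (h : G.iso G') (h' : Deriv Rules G' H) : Deriv Rules G H :=
  Relation.ReflTransGen.head (Or.inl h) h'

theorem Deriv.of_iso_right {Rules : LGraph → LGraph → Prop} {G H H' : LGraph}
    (h' : Deriv Rules G H) (h : H.iso H') : Deriv Rules G H' :=
  h'.tail (Or.inl h)

theorem Provable.tensor {A B : LGraph} (hA : Provable GSRule A) (hB : Provable GSRule B) :
    Provable GSRule (A.tensor B) := by
  refine Relation.ReflTransGen.trans hA ?_
  have h1 : Deriv GSRule (A.plug Set.univ LGraph.empty) (A.plug Set.univ B) :=
    hB.plug A Set.univ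
  have h2 : Deriv GSRule A (A.plug Set.univ B) :=
    h1.of_iso_left (iso_symm ⟨A.plugEmpty Set.univ⟩)
  exact h2.of_iso_right ⟨A.plugUniv B⟩
/-- No partition of the vertices into two nonempty classes has all cross pairs adjacent. -/
def NoSplit (G : LGraph) : Prop :=
  ∀ f : G.V → Bool, (∀ v w, f v ≠ f w → G.adj v w) →
    (∀ v, f v = true) ∨ (∀ v, f v = false)

theorem noSplit_par (A B : LGraph) (hA : Nonempty A.V) (hB : Nonempty B.V) :
    NoSplit (A.par B) := by
  intro f hf
  obtain ⟨a0⟩ := hA; obtain ⟨b0⟩ := hB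
  have hcross : ∀ (a : A.V) (b : B.V), f (Sum.inl a) = f (Sum.inr b) := by
    intro a b
    by_contra hne
    exact hf _ _ hne
  have hconst : ∀ v, f v = f (Sum.inl a0) := by
    rintro (a | b)
    · rw [hcross a b0, hcross a0 b0]
    · exact (hcross a0 b).symm
  cases h : f (Sum.inl a0) with
  | true => exact Or.inl fun v => (hconst v).trans h
  | false => exact Or.inr fun v => (hconst v).trans h

theorem noSplit_par_left (A B : LGraph) (hB : IsEmpty B.V) (hA : NoSplit A) :
    NoSplit (A.par B) := by
  intro f hf
  have h := hA (fun a => f (Sum.inl a)) (fun v w hne => hf _ _ hne)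
  rcases h with h | h
  · exact Or.inl (by rintro (a | b); exacts [h a, hB.elim b])
  · exact Or.inr (by rintro (a | b); exacts [h a, hB.elim b])

theorem noSplit_dual_comp (P : LGraph) (hP : P.Prime) (h4 : 4 ≤ Fintype.card P.V)
    (M : P.V → LGraph) (hM : ∀ v, Nonempty (M v).V) :
    NoSplit (P.dual.comp M) := by
  classical
  intro f hf
  by_contra hcon
  push_neg at hcon
  obtain ⟨⟨x1, hx1⟩, ⟨x2, hx2⟩⟩ := hcon
  have hx1' : f x1 = false := by cases h : f x1 <;> simp_all
  have hx2' : f x2 = true := by cases h : f x2 <;> simp_all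
  clear hx1 hx2
  obtain ⟨v1, a1⟩ := x1
  obtain ⟨v2, a2⟩ := x2
  set Vt : Set P.V := {v | ∃ a, f ⟨v, a⟩ = true} with hVt
  set Vf : Set P.V := {v | ∃ a, f ⟨v, a⟩ = false} with hVf
  have h1 : ∀ v w, v ∈ Vt → w ∈ Vf → v ≠ w → ¬ P.adj v w := by
    rintro v w ⟨a, ha⟩ ⟨b, hb⟩ hvw
    have hadj := hf ⟨v, a⟩ ⟨w, b⟩ (by rw [ha, hb]; simp)
    rcases hadj with ⟨u, x, y, hx, hy, _⟩ | ⟨_, hd⟩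
    · exact absurd ((Sigma.mk.inj_iff.1 hx).1.trans (Sigma.mk.inj_iff.1 hy).1.symm)
        hvw
    · exact hd.2
  have h2 : ∀ v, v ∈ Vt ∨ v ∈ Vf := by
    intro v
    obtain ⟨a⟩ := hM v
    cases h : f ⟨v, a⟩ with
    | true => exact Or.inl ⟨a, h⟩
    | false => exact Or.inr ⟨a, h⟩
  have hVtne : v2 ∈ Vt := ⟨a2, hx2'⟩
  have hVfne : v1 ∈ Vf := ⟨a1, hx1'⟩
  have hcard2 : ∀ v w : P.V, ¬ (Set.univ : Set P.V) ⊆ {v, w} := by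
    intro v w hsub
    have hle : (Finset.univ : Finset P.V).card ≤ ({v, w} : Finset P.V).card := by
      apply Finset.card_le_card
      intro x _
      have := hsub (Set.mem_univ x)
      simpa using this
    have : ({v, w} : Finset P.V).card ≤ 2 :=
      (Finset.card_insert_le _ _).trans (by simp)
    rw [Finset.card_univ] at hle
    omega
  by_cases hI : ∃ v, v ∈ Vt ∧ v ∈ Vf
  · obtain ⟨v, hvT, hvF⟩ := hI
    have hiso : ∀ w, w ≠ v → ¬ P.adj v w := by
      intro w hw hadj
      rcases h2 w with hwT | hwF
      · exact h1 w v hwT hvF hw (P.symm hadj)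
      · exact h1 v w hvT hwF (Ne.symm hw) hadj
    have hmod : P.IsModule {w | w ≠ v} := by
      intro u hu x hx y hy
      have hu' : u = v := not_not.1 hu
      subst hu'
      exact iff_of_false (hiso x hx) (hiso y hy)
    rcases hP.2 _ hmod with h | ⟨w0, h⟩ | h
    · obtain ⟨w, hw⟩ := Fintype.exists_ne_of_one_lt_card (by omega) v
      exact absurd (h ▸ hw : w ∈ (∅ : Set P.V)) (Set.notMem_empty w)
    · refine hcard2 v w0 ?_
      intro x _
      by_cases hx : x = v
      · simp [hx]
      · have : x ∈ ({w0} : Set P.V) := h ▸ hx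
        simp [this]
    · have : v ∈ {w | w ≠ v} := h.symm ▸ Set.mem_univ v
      exact this rfl
  · push_neg at hI
    have hmodT : P.IsModule Vt := by
      intro u hu x hx y hy
      have huF : u ∈ Vf := (h2 u).resolve_left hu
      have hne : ∀ z, z ∈ Vt → ¬ P.adj u z := fun z hz hadj =>
        h1 z u hz huF (fun he => hu (he ▸ hz)) (P.symm hadj)
      exact iff_of_false (hne x hx) (hne y hy)
    have hmodF : P.IsModule Vf := by
      intro u hu x hx y hy
      have huT : u ∈ Vt := (h2 u).resolve_right hu
      have hne : ∀ z, z ∈ Vf → ¬ P.adj u z := fun z hz hadj =>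
        h1 u z huT hz (fun he => hu (he ▸ hz)) hadj
      exact iff_of_false (hne x hx) (hne y hy)
    have hTsing : ∃ w, Vt = {w} := by
      rcases hP.2 _ hmodT with h | h | h
      · exact absurd (h ▸ hVtne) (Set.notMem_empty _)
      · exact h
      · exact absurd hVfne (hI v1 (h ▸ Set.mem_univ _))
    have hFsing : ∃ w, Vf = {w} := by
      rcases hP.2 _ hmodF with h | h | h
      · exact absurd (h ▸ hVfne) (Set.notMem_empty _)
      · exact h
      · exact absurd (h ▸ Set.mem_univ v2 : v2 ∈ Vf) (hI v2 ⟨a2, hx2'⟩)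
    obtain ⟨w1, hw1⟩ := hTsing
    obtain ⟨w2, hw2⟩ := hFsing
    refine hcard2 w1 w2 ?_
    intro x _
    rcases h2 x with hx | hx
    · have : x ∈ ({w1} : Set P.V) := hw1 ▸ hx
      simp at this; simp [this]
    · have : x ∈ ({w2} : Set P.V) := hw2 ▸ hx
      simp at this; simp [this]
namespace LGraph
/-- Induced subgraph on a predicate. -/
noncomputable def induce (G : LGraph) (p : G.V → Prop) : LGraph :=
  letI := Classical.decPred p
  { V := {v // p v}
    adj := fun v w => G.adj v.1 w.1
    symm := fun h => G.symm h
    irrefl := fun v => G.irrefl v.1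
    label := fun v => G.label v.1 }
end LGraph

theorem split_lemma (C : LGraph) (R : Set C.V) (X A B : LGraph)
    (e : LGraph.Iso (C.plug R X) (A.tensor B)) (hX : Nonempty X.V)
    (hall : ∀ v : X.V, (e.toEquiv (Sum.inr v)).isLeft = true) :
    ∃ (C' : LGraph) (R' : Set C'.V) (B' : LGraph),
      A.iso (C'.plug R' X) ∧ B.iso B' ∧
      ∀ Y : LGraph, (C.plug R Y).iso ((C'.plug R' Y).tensor B') := by
  classical
  obtain ⟨x0⟩ := hX
  have h3 : ∀ u : C.V, (e.toEquiv (Sum.inl u)).isLeft = true →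
      ∃ a : A.V, e.toEquiv (Sum.inl u) = Sum.inl a := by
    intro u hu
    rcases hs : e.toEquiv (Sum.inl u) with a | b
    · exact ⟨a, rfl⟩
    · rw [hs] at hu; simp at hu
  have h4 : ∀ x : X.V, ∃ a : A.V, e.toEquiv (Sum.inr x) = Sum.inl a := by
    intro x
    have hu := hall x
    rcases hs : e.toEquiv (Sum.inr x) with a | b
    · exact ⟨a, rfl⟩
    · rw [hs] at hu; simp at hu
  have h5 : ∀ u : C.V, ¬ (e.toEquiv (Sum.inl u)).isLeft = true →
      ∃ b : B.V, e.toEquiv (Sum.inl u) = Sum.inr b := by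
    intro u hu
    rcases hs : e.toEquiv (Sum.inl u) with a | b
    · rw [hs] at hu; simp at hu
    · exact ⟨b, rfl⟩
  have h1 : ∀ b : B.V, ∃ u : C.V, e.toEquiv (Sum.inl u) = Sum.inr b := by
    intro b
    rcases hs : e.toEquiv.symm (Sum.inr b) with u | x
    · exact ⟨u, by rw [← hs]; exact e.toEquiv.apply_symm_apply _⟩
    · have h := hall x
      rw [← hs, e.toEquiv.apply_symm_apply (Sum.inr b)] at h
      simp at h
  choose α hα using h3
  choose ξ hξ using h4
  choose β hβ using h5
  choose φ hφ using h1
  have hφp : ∀ b, ¬ (e.toEquiv (Sum.inl (φ b))).isLeft = true := by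
    intro b; rw [hφ b]; simp
  have hBR : ∀ u : C.V, ¬ (e.toEquiv (Sum.inl u)).isLeft = true → u ∈ R := by
    intro u hu
    have hadj : (C.plug R X).adj (Sum.inr x0) (Sum.inl u) := by
      rw [e.adj_iff (Sum.inr x0) (Sum.inl u), hξ x0, hβ u hu]
      trivial
    exact hadj
  refine ⟨C.induce (fun u => (e.toEquiv (Sum.inl u)).isLeft = true),
    {u | u.1 ∈ R}, C.induce (fun u => ¬ (e.toEquiv (Sum.inl u)).isLeft = true),
    ?_, ?_, ?_⟩
  · -- A ≅ C'[X]
    refine iso_symm ⟨{ toEquiv := Equiv.ofBijective (Sum.elim (fun u => α u.1 u.2) ξ) ⟨?_, ?_⟩, adj_iff := ?_, label_eq := ?_ }⟩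
    · rintro (u | x) (u' | x') h <;> simp only [Sum.elim_inl, Sum.elim_inr] at h
      · have h2 : e.toEquiv (Sum.inl u.1) = e.toEquiv (Sum.inl u'.1) := by
          rw [hα u.1 u.2, hα u'.1 u'.2, h]
        exact congrArg Sum.inl (Subtype.ext (Sum.inl_injective (e.toEquiv.injective h2)))
      · have h2 : e.toEquiv (Sum.inl u.1) = e.toEquiv (Sum.inr x') := by
          rw [hα u.1 u.2, hξ x', h]
        have := e.toEquiv.injective h2
        simp at this
      · have h2 : e.toEquiv (Sum.inr x) = e.toEquiv (Sum.inl u'.1) := by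
          rw [hα u'.1 u'.2, hξ x, h]
        have := e.toEquiv.injective h2
        simp at this
      · have h2 : e.toEquiv (Sum.inr x) = e.toEquiv (Sum.inr x') := by
          rw [hξ x, hξ x', h]
        exact congrArg Sum.inr (Sum.inr_injective (e.toEquiv.injective h2))
    · intro a
      rcases hs : e.toEquiv.symm (Sum.inl a) with u | x
      · have he : e.toEquiv (Sum.inl u) = Sum.inl a := by rw [← hs]; exact e.toEquiv.apply_symm_apply _
        have hu : (e.toEquiv (Sum.inl u)).isLeft = true := by rw [he]; rfl
        exact ⟨Sum.inl ⟨u, hu⟩, Sum.inl_injective ((hα u hu).symm.trans he)⟩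
      · have he : e.toEquiv (Sum.inr x) = Sum.inl a := by rw [← hs]; exact e.toEquiv.apply_symm_apply _
        exact ⟨Sum.inr x, Sum.inl_injective ((hξ x).symm.trans he)⟩
    · rintro (u | x) (u' | x')
      · have key := e.adj_iff (Sum.inl u.1) (Sum.inl u'.1)
        rw [hα u.1 u.2, hα u'.1 u'.2] at key
        simp [LGraph.plug, LGraph.plugAdj, LGraph.tensor, LGraph.tensorAdj,
          LGraph.induce] at key ⊢; exact key
      · have key := e.adj_iff (Sum.inl u.1) (Sum.inr x')
        rw [hα u.1 u.2, hξ x'] at key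
        simp [LGraph.plug, LGraph.plugAdj, LGraph.tensor, LGraph.tensorAdj,
          LGraph.induce] at key ⊢; exact key
      · have key := e.adj_iff (Sum.inr x) (Sum.inl u'.1)
        rw [hα u'.1 u'.2, hξ x] at key
        simp [LGraph.plug, LGraph.plugAdj, LGraph.tensor, LGraph.tensorAdj,
          LGraph.induce] at key ⊢; exact key
      · have key := e.adj_iff (Sum.inr x) (Sum.inr x')
        rw [hξ x, hξ x'] at key
        simp [LGraph.plug, LGraph.plugAdj, LGraph.tensor, LGraph.tensorAdj,
          LGraph.induce] at key ⊢; exact key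
    · rintro (u | x)
      · have key := e.label_eq (Sum.inl u.1)
        rw [hα u.1 u.2] at key
        simp [LGraph.plug, LGraph.tensor, LGraph.induce] at key ⊢; exact key
      · have key := e.label_eq (Sum.inr x)
        rw [hξ x] at key
        simp [LGraph.plug, LGraph.tensor, LGraph.induce] at key ⊢; exact key
  · -- B ≅ B'
    refine ⟨{ toEquiv := Equiv.ofBijective (fun b => ⟨φ b, hφp b⟩) ⟨?_, ?_⟩, adj_iff := ?_, label_eq := ?_ }⟩
    · intro b b' h
      have h0 : φ b = φ b' := congrArg Subtype.val h
      have h2 : e.toEquiv (Sum.inl (φ b)) = e.toEquiv (Sum.inl (φ b')) := by rw [h0]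
      rw [hφ b, hφ b'] at h2
      exact Sum.inr_injective h2
    · rintro ⟨u, hu⟩
      refine ⟨β u hu, Subtype.ext ?_⟩
      have h2 : e.toEquiv (Sum.inl (φ (β u hu))) = e.toEquiv (Sum.inl u) := by
        rw [hφ (β u hu), hβ u hu]
      exact Sum.inl_injective (e.toEquiv.injective h2)
    · intro b b'
      have key := e.adj_iff (Sum.inl (φ b)) (Sum.inl (φ b'))
      rw [hφ b, hφ b'] at key
      have := key.symm
      simp [LGraph.plug, LGraph.plugAdj, LGraph.tensor, LGraph.tensorAdj,
        LGraph.induce, Equiv.ofBijective] at this ⊢; exact this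
    · intro b
      have key := e.label_eq (Sum.inl (φ b))
      rw [hφ b] at key
      have key' := key.symm
      simp [LGraph.plug, LGraph.tensor, LGraph.induce, Equiv.ofBijective] at key' ⊢; exact key'
  · -- context factorisation
    intro Y
    refine iso_symm ⟨{ toEquiv := Equiv.ofBijective (Sum.elim (Sum.elim (fun u => Sum.inl u.1) (fun y => Sum.inr y)) (fun u => Sum.inl u.1)) ⟨?_, ?_⟩, adj_iff := ?_, label_eq := ?_ }⟩
    · rintro ((u | y) | u') ((v | z) | v') h <;>
        simp only [Sum.elim_inl, Sum.elim_inr] at h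
      · exact congrArg Sum.inl (congrArg Sum.inl (Subtype.ext (Sum.inl_injective h)))
      · cases h
      · exact absurd (Sum.inl_injective h ▸ u.2) v'.2
      · cases h
      · exact congrArg Sum.inl (congrArg Sum.inr (Sum.inr_injective h))
      · cases h
      · exact absurd (Sum.inl_injective h ▸ v.2) u'.2
      · cases h
      · exact congrArg Sum.inr (Subtype.ext (Sum.inl_injective h))
    · rintro (u | y)
      · by_cases hu : (e.toEquiv (Sum.inl u)).isLeft = true
        · exact ⟨Sum.inl (Sum.inl ⟨u, hu⟩), rfl⟩
        · exact ⟨Sum.inr ⟨u, hu⟩, rfl⟩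
      · exact ⟨Sum.inl (Sum.inr y), rfl⟩
    · rintro ((u | y) | u') ((v | z) | v')
      · simp [LGraph.plug, LGraph.plugAdj, LGraph.tensor, LGraph.tensorAdj,
          LGraph.induce] <;> trivial
      · simp [LGraph.plug, LGraph.plugAdj, LGraph.tensor, LGraph.tensorAdj,
          LGraph.induce] <;> trivial
      · -- C' vertex vs B' vertex : both adjacent
        have key := e.adj_iff (Sum.inl u.1) (Sum.inl v'.1)
        rw [hα u.1 u.2, hβ v'.1 v'.2] at key
        simp [LGraph.plug, LGraph.plugAdj, LGraph.tensor, LGraph.tensorAdj,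
          LGraph.induce] at key ⊢; exact key
      · simp [LGraph.plug, LGraph.plugAdj, LGraph.tensor, LGraph.tensorAdj,
          LGraph.induce] <;> trivial
      · simp [LGraph.plug, LGraph.plugAdj, LGraph.tensor, LGraph.tensorAdj,
          LGraph.induce] <;> trivial
      · -- Y vertex vs B' vertex
        have hvR := hBR v'.1 v'.2
        simp [LGraph.plug, LGraph.plugAdj, LGraph.tensor, LGraph.tensorAdj,
          LGraph.induce, hvR]; exact hvR
      · have key := e.adj_iff (Sum.inl u'.1) (Sum.inl v.1)
        rw [hα v.1 v.2, hβ u'.1 u'.2] at key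
        simp [LGraph.plug, LGraph.plugAdj, LGraph.tensor, LGraph.tensorAdj,
          LGraph.induce] at key ⊢; exact key
      · have hvR := hBR u'.1 u'.2
        simp [LGraph.plug, LGraph.plugAdj, LGraph.tensor, LGraph.tensorAdj,
          LGraph.induce, hvR]; exact hvR
      · simp [LGraph.plug, LGraph.plugAdj, LGraph.tensor, LGraph.tensorAdj,
          LGraph.induce] <;> trivial
    · rintro ((u | y) | u') <;>
        simp [LGraph.plug, LGraph.tensor, LGraph.induce] <;> trivial
theorem GSRule.concl_nonempty {p c : LGraph} (h : GSRule p c) : Nonempty c.V := by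
  cases h with
  | ai a => exact ⟨Sum.inl ()⟩
  | ss A B S hA hS => exact ⟨Sum.inr hA.some⟩
  | p n P e M N hP hn hM =>
      have hPv : Nonempty P.V := Fintype.card_pos_iff.1 (by have := hP.1; omega)
      exact ⟨Sum.inl ⟨hPv.some, (hM (e hPv.some)).some⟩⟩

theorem GSRule.concl_noSplit {p c : LGraph} (h : GSRule p c) : NoSplit c := by
  cases h with
  | ai a => exact noSplit_par _ _ ⟨()⟩ ⟨()⟩
  | ss A B S hA hS =>
      have hB : Nonempty B.V := by
        obtain ⟨x, -⟩ := Set.nonempty_iff_ne_empty.2 hS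
        exact ⟨x⟩
      exact noSplit_par _ _ hB hA
  | p n P e M N hP hn hM =>
      have h4 : 4 ≤ Fintype.card P.V := by
        rw [Fintype.card_congr e, Fintype.card_fin]; exact hn
      by_cases hemp : Nonempty (P.comp fun v => N (e v)).V
      · have hPv : Nonempty P.V := Fintype.card_pos_iff.1 (by omega)
        have hL : Nonempty (P.dual.comp fun v => M (e v)).V :=
          ⟨⟨hPv.some, (hM (e hPv.some)).some⟩⟩
        exact noSplit_par _ _ hL hemp
      · haveI := not_nonempty_iff.1 hemp
        exact noSplit_par_left _ _ (not_nonempty_iff.1 hemp)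
          (noSplit_dual_comp P hP h4 _ (fun v => hM (e v)))

theorem provable_parts {G : LGraph} (h : Provable GSRule G) :
    ∀ A B : LGraph, G.iso (A.tensor B) → Provable GSRule A ∧ Provable GSRule B := by
  induction h with
  | refl =>
      intro A B hiso
      obtain ⟨e⟩ := hiso
      haveI hE : IsEmpty LGraph.empty.V := ⟨fun x => x.elim⟩
      haveI hAB : IsEmpty (A.V ⊕ B.V) := e.toEquiv.symm.isEmpty
      haveI hA : IsEmpty A.V := ⟨fun a => hAB.false (Sum.inl a)⟩
      haveI hB : IsEmpty B.V := ⟨fun b => hAB.false (Sum.inr b)⟩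
      constructor
      · exact Relation.ReflTransGen.single (Or.inl ⟨LGraph.isoOfIsEmpty A⟩)
      · exact Relation.ReflTransGen.single (Or.inl ⟨LGraph.isoOfIsEmpty B⟩)
  | tail hab hbc ih =>
      intro A B hiso
      rcases hbc with hbciso | ⟨Cc, R, p, cc, hrule, hbp, hcc⟩
      · exact ih A B (iso_trans hbciso hiso)
      · obtain ⟨e⟩ := iso_trans (iso_symm hcc) hiso
        have hne : Nonempty cc.V := hrule.concl_nonempty
        have hns : NoSplit cc := hrule.concl_noSplit
        have hf : ∀ v w : cc.V,
            (e.toEquiv (Sum.inr v)).isLeft ≠ (e.toEquiv (Sum.inr w)).isLeft →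
            cc.adj v w := by
          intro v w hvw
          have hadj : (Cc.plug R cc).adj (Sum.inr v) (Sum.inr w) := by
            rw [e.adj_iff (Sum.inr v) (Sum.inr w)]
            rcases h1 : e.toEquiv (Sum.inr v) with a | b <;>
              rcases h2 : e.toEquiv (Sum.inr w) with a' | b'
            · exact absurd (by simp [h1, h2]) hvw
            · trivial
            · trivial
            · exact absurd (by simp [h1, h2]) hvw
          exact hadj
        rcases hns (fun v => (e.toEquiv (Sum.inr v)).isLeft) hf with hall | hall
        · obtain ⟨C', R', B', hA, hB, hY⟩ := split_lemma Cc R cc A B e hne hall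
          have hbG := ih _ _ (iso_trans hbp (hY p))
          constructor
          · refine Relation.ReflTransGen.tail (Relation.ReflTransGen.tail hbG.1 ?_)
              (Or.inl (iso_symm hA))
            exact Or.inr ⟨C', R', p, cc, hrule, iso_refl _, iso_refl _⟩
          · exact Relation.ReflTransGen.tail hbG.2 (Or.inl (iso_symm hB))
        · set e' : LGraph.Iso (Cc.plug R cc) (B.tensor A) :=
            e.trans (LGraph.tensorComm A B) with he'
          have hall' : ∀ v : cc.V, (e'.toEquiv (Sum.inr v)).isLeft = true := by
            intro v
            have h0 := hall v
            rcases h1 : e.toEquiv (Sum.inr v) with a | b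
            · rw [h1] at h0; simp at h0
            · rw [show e'.toEquiv (Sum.inr v)
                    = (Equiv.sumComm A.V B.V) (e.toEquiv (Sum.inr v)) from rfl, h1]
              rfl
          obtain ⟨C', R', B', hA, hB, hY⟩ := split_lemma Cc R cc B A e' hne hall'
          have hbG := ih _ _ (iso_trans hbp (hY p))
          constructor
          · exact Relation.ReflTransGen.tail hbG.2 (Or.inl (iso_symm hB))
          · refine Relation.ReflTransGen.tail (Relation.ReflTransGen.tail hbG.1 ?_)
              (Or.inl (iso_symm hA))
            exact Or.inr ⟨C', R', p, cc, hrule, iso_refl _, iso_refl _⟩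
/-- For all graphs `A` and `B`, the graph `A ⊗ B` is provable in
GS if and only if `A` is provable in GS and `B` is provable in GS. -/
theorem tensor_provable_iff (A B : LGraph) :
    Provable GSRule (A.tensor B) ↔ Provable GSRule A ∧ Provable GSRule B := by
  constructor
  · intro h
    exact provable_parts h A B (iso_refl _)
  · rintro ⟨hA, hB⟩
    exact hA.tensor hB
end GSP
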